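/- For every complex symmetric 3×3 matrix τ whose imaginary part is positive definite and every δ', δ'' ∈ ℝ³, the function z ↦ θ[δ](z; τ) is holomorphic (complex differentiable) on all of ℂ³. -/

import Mathlib

open Matrix

section Helpers

lemma summ_exp_neg_abs_int : Summable (fun m : ℤ => Real.exp (-|(m : ℝ)|)) := by
  have hnat : Summable (fun n : ℕ => Real.exp (-(n : ℝ))) := by
    have : (fun n : ℕ => Real.exp (-(n : ℝ))) = fun n : ℕ => (Real.exp (-1)) ^ n := by
      funext n
      rw [← Real.exp_nat_mul]
      ring_nf
    rw [this]
    exact summable_geometric_of_lt_one (Real.exp_pos _).le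
      (Real.exp_lt_one_iff.2 (by norm_num))
  apply Summable.of_nat_of_neg <;> simpa using hnat

lemma summ1d (a b d : ℝ) (ha : 0 < a) :
    Summable (fun m : ℤ => Real.exp (-a * ((m : ℝ) + d) ^ 2 + b * |(m : ℝ) + d|)) := by
  have hB : ∀ m : ℤ, Real.exp (-a * ((m : ℝ) + d) ^ 2 + b * |(m : ℝ) + d|)
      ≤ Real.exp ((b + 1) ^ 2 / (4 * a) + |d|) * Real.exp (-|(m : ℝ)|) := by
    intro m
    rw [← Real.exp_add]
    apply Real.exp_le_exp.2
    set x := |(m : ℝ) + d| with hx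
    have hx0 : 0 ≤ x := abs_nonneg _
    have h1 : |(m : ℝ)| ≤ x + |d| := by
      calc |(m : ℝ)| = |((m : ℝ) + d) + (-d)| := by ring_nf
        _ ≤ x + |d| := by simpa [abs_neg] using abs_add_le ((m : ℝ) + d) (-d)
    have h2 : ((m : ℝ) + d) ^ 2 = x ^ 2 := (sq_abs _).symm
    have hbx : b * x ≤ |b| * x := mul_le_mul_of_nonneg_right (le_abs_self b) hx0
    have h3 : -a * x ^ 2 + (b + 1) * x ≤ (b + 1) ^ 2 / (4 * a) := by
      rw [le_div_iff₀ (by positivity)]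
      nlinarith [sq_nonneg (b + 1 - 2 * a * x)]
    rw [h2]
    nlinarith
  exact Summable.of_nonneg_of_le (fun m => (Real.exp_pos _).le) hB
    (summ_exp_neg_abs_int.mul_left _)

def e3 : (Fin 3 → ℤ) ≃ ℤ × ℤ × ℤ where
  toFun n := (n 0, n 1, n 2)
  invFun p := ![p.1, p.2.1, p.2.2]
  left_inv n := by
    funext i
    fin_cases i <;> rfl
  right_inv p := rfl

lemma summ_pi3 {f : Fin 3 → ℤ → ℝ} (h : ∀ i, Summable (f i)) (hn : ∀ i m, 0 ≤ f i m) :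
    Summable (fun n : Fin 3 → ℤ => ∏ i, f i (n i)) := by
  have hs : Summable (fun p : ℤ × ℤ × ℤ => f 0 p.1 * (f 1 p.2.1 * f 2 p.2.2)) :=
    (h 0).mul_of_nonneg ((h 1).mul_of_nonneg (h 2) (hn 1) (hn 2)) (hn 0)
      (fun p => mul_nonneg (hn 1 _) (hn 2 _))
  have : (fun n : Fin 3 → ℤ => ∏ i, f i (n i)) =
      (fun p : ℤ × ℤ × ℤ => f 0 p.1 * (f 1 p.2.1 * f 2 p.2.2)) ∘ e3 := by
    funext n
    rw [Fin.prod_univ_three]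
    simp [e3, mul_assoc]
    rfl
  rw [this]
  exact hs.comp_injective e3.injective

lemma posdef_bound (A : Matrix (Fin 3) (Fin 3) ℝ) (hA : A.PosDef) :
    ∃ c > 0, ∀ v : Fin 3 → ℝ, c * (∑ i, v i ^ 2) ≤ v ⬝ᵥ A *ᵥ v := by
  have hcont : Continuous fun v : Fin 3 → ℝ => v ⬝ᵥ A *ᵥ v := by
    simp only [dotProduct, mulVec]
    fun_prop
  have hcompact : IsCompact (Metric.sphere (0 : Fin 3 → ℝ) 1) := isCompact_sphere _ _
  have hne : (Metric.sphere (0 : Fin 3 → ℝ) 1).Nonempty :=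
    NormedSpace.sphere_nonempty.2 zero_le_one
  obtain ⟨u, hu, hmin⟩ := hcompact.exists_isMinOn hne hcont.continuousOn
  set c := u ⬝ᵥ A *ᵥ u with hc
  have hu1 : ‖u‖ = 1 := by simpa using hu
  have hu0 : u ≠ 0 := fun h => by simp [h] at hu1
  have hcpos : 0 < c := by simpa using hA.dotProduct_mulVec_pos hu0
  refine ⟨c / 3, by positivity, fun v => ?_⟩
  rcases eq_or_ne v 0 with rfl | hv
  · simp
  · set t := ‖v‖ with ht
    have ht0 : 0 < t := norm_pos_iff.2 hv
    set w := t⁻¹ • v with hw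
    have hwsph : w ∈ Metric.sphere (0 : Fin 3 → ℝ) 1 := by
      simp only [hw, mem_sphere_iff_norm, sub_zero, norm_smul, norm_inv, Real.norm_eq_abs,
        abs_of_pos ht0]
      exact inv_mul_cancel₀ ht0.ne'
    have hqw : c ≤ w ⬝ᵥ A *ᵥ w := hmin hwsph
    have hvw : v = t • w := by
      rw [hw, smul_smul, mul_inv_cancel₀ ht0.ne', one_smul]
    have hquad : v ⬝ᵥ A *ᵥ v = t ^ 2 * (w ⬝ᵥ A *ᵥ w) := by
      rw [hvw, smul_dotProduct, mulVec_smul, dotProduct_smul]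
      simp [smul_eq_mul]; ring
    have hsum : ∑ i, v i ^ 2 ≤ 3 * t ^ 2 := by
      have hpt : ∀ i, v i ^ 2 ≤ t ^ 2 := fun i => by
        have h1 : |v i| ≤ t := by
          simpa using norm_le_pi_norm v i
        nlinarith [abs_nonneg (v i), sq_abs (v i)]
      calc ∑ i, v i ^ 2 ≤ ∑ _i : Fin 3, t ^ 2 := Finset.sum_le_sum fun i _ => hpt i
        _ = 3 * t ^ 2 := by
          rw [Finset.sum_const, Finset.card_univ, Fintype.card_fin, nsmul_eq_mul]
          norm_num
    calc c / 3 * ∑ i, v i ^ 2 ≤ c / 3 * (3 * t ^ 2) := by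
          apply mul_le_mul_of_nonneg_left hsum (by positivity)
      _ = t ^ 2 * c := by ring
      _ ≤ t ^ 2 * (w ⬝ᵥ A *ᵥ w) := by nlinarith
      _ = v ⬝ᵥ A *ᵥ v := hquad.symm

end Helpers

/-- The Riemann theta function with characteristic `δ = (δ', δ'')` in genus 3:
`θ[δ](z; τ) = Σ_{n ∈ ℤ³} exp(2πi(½·ᵗ(n+δ')τ(n+δ') + ᵗ(n+δ')(z+δ'')))`. -/
noncomputable def thetaChar (τ : Matrix (Fin 3) (Fin 3) ℂ) (δ' δ'' : Fin 3 → ℝ)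
    (z : Fin 3 → ℂ) : ℂ :=
  ∑' n : Fin 3 → ℤ,
    Complex.exp (2 * (Real.pi : ℂ) * Complex.I *
      ((1 / 2) * ((fun i => (n i : ℂ) + (δ' i : ℂ)) ⬝ᵥ τ *ᵥ (fun i => (n i : ℂ) + (δ' i : ℂ))) +
        (fun i => (n i : ℂ) + (δ' i : ℂ)) ⬝ᵥ (fun i => z i + (δ'' i : ℂ))))

set_option maxHeartbeats 2000000 in
/-- For every complex symmetric 3×3 matrix `τ` whose imaginary part is positive definite and
every `δ', δ'' ∈ ℝ³`, the function `z ↦ θ[δ](z; τ)` is holomorphic (complex differentiable)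
on all of `ℂ³`. -/
theorem thetaChar_differentiable (τ : Matrix (Fin 3) (Fin 3) ℂ) (hsymm : τ.IsSymm)
    (hpos : (τ.map Complex.im).PosDef) (δ' δ'' : Fin 3 → ℝ) :
    Differentiable ℂ (thetaChar τ δ' δ'') := by
  obtain ⟨c, hc, hAq⟩ := posdef_bound _ hpos
  set v : (Fin 3 → ℤ) → Fin 3 → ℝ := fun n i => (n i : ℝ) + δ' i with hvdef
  set w : (Fin 3 → ℤ) → Fin 3 → ℂ := fun n i => ((v n i : ℝ) : ℂ) with hwdef
  have hwe : ∀ n : Fin 3 → ℤ, (fun i => ((n i : ℂ)) + ((δ' i : ℝ) : ℂ)) = w n := by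
    intro n; funext i
    simp only [hwdef, hvdef]
    push_cast
    ring
  set f : (Fin 3 → ℤ) → (Fin 3 → ℂ) → ℂ := fun n z =>
    Complex.exp (2 * (Real.pi : ℂ) * Complex.I *
      ((1 / 2) * (w n ⬝ᵥ τ *ᵥ w n) + w n ⬝ᵥ (fun i => z i + (δ'' i : ℂ)))) with hfdef
  have htheta : thetaChar τ δ' δ'' = fun z => ∑' n, f n z := by
    funext z
    unfold thetaChar
    apply tsum_congr
    intro n
    rw [hwe n]
  rw [htheta]
  -- derivative data
  set L : (Fin 3 → ℤ) → (Fin 3 → ℂ) →L[ℂ] ℂ := fun n =>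
    (2 * (Real.pi : ℂ) * Complex.I) •
      (∑ i, w n i • (ContinuousLinearMap.proj i : (Fin 3 → ℂ) →L[ℂ] ℂ)) with hLdef
  have hLapp : ∀ n z, L n z = 2 * (Real.pi : ℂ) * Complex.I * (w n ⬝ᵥ z) := by
    intro n z
    simp [hLdef, ContinuousLinearMap.sum_apply, dotProduct, Finset.mul_sum]
  set C : (Fin 3 → ℤ) → ℂ := fun n =>
    2 * (Real.pi : ℂ) * Complex.I *
      ((1 / 2) * (w n ⬝ᵥ τ *ᵥ w n) + w n ⬝ᵥ (fun i => ((δ'' i : ℝ) : ℂ))) with hCdef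
  have hfC : ∀ n z, f n z = Complex.exp (C n + L n z) := by
    intro n z
    rw [hLapp]
    simp only [hfdef, hCdef]
    congr 1
    have hz : (fun i => z i + ((δ'' i : ℝ) : ℂ)) = z + (fun i => ((δ'' i : ℝ) : ℂ)) := rfl
    rw [hz, dotProduct_add]
    ring
  have hderiv : ∀ n z, HasFDerivAt (f n) (f n z • L n) z := by
    intro n z
    have h1 : HasFDerivAt (fun y => C n + L n y) (L n) z := (L n).hasFDerivAt.const_add _
    have h2 := h1.cexp
    have hfeq : f n = fun y => Complex.exp (C n + L n y) := funext (hfC n)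
    rw [hfeq]
    exact h2
  -- imaginary parts
  have hqim : ∀ n, (w n ⬝ᵥ τ *ᵥ w n).im = v n ⬝ᵥ (τ.map Complex.im) *ᵥ v n := by
    intro n
    simp only [hwdef, dotProduct, mulVec, map_apply, Complex.im_sum, Complex.mul_im,
      Complex.ofReal_re, Complex.ofReal_im, Finset.mul_sum]
    simp [Complex.im_sum, Complex.mul_im, mul_comm]
  have hdim : ∀ n (z : Fin 3 → ℂ),
      (w n ⬝ᵥ (fun i => z i + ((δ'' i : ℝ) : ℂ))).im = ∑ i, v n i * (z i).im := by
    intro n z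
    simp [hwdef, dotProduct, Complex.im_sum, Complex.mul_im]
  -- the norm of f n z
  have hfnorm : ∀ n (z : Fin 3 → ℂ), ‖f n z‖ =
      Real.exp (-(Real.pi * (v n ⬝ᵥ (τ.map Complex.im) *ᵥ v n)
        + 2 * Real.pi * ∑ i, v n i * (z i).im)) := by
    intro n z
    rw [hfdef]
    simp only []
    rw [Complex.norm_exp]
    congr 1
    have hre : ∀ u : ℂ, ((2 * (Real.pi : ℂ) * Complex.I) * u).re = -(2 * Real.pi * u.im) := by
      intro u
      simp [Complex.mul_re, Complex.mul_im]
    rw [hre]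
    have him : ((1 / 2 : ℂ) * (w n ⬝ᵥ τ *ᵥ w n) +
        w n ⬝ᵥ (fun i => z i + ((δ'' i : ℝ) : ℂ))).im
        = (1 / 2) * (v n ⬝ᵥ (τ.map Complex.im) *ᵥ v n) + ∑ i, v n i * (z i).im := by
      rw [Complex.add_im, hdim]
      congr 1
      rw [Complex.mul_im]
      rw [hqim]
      norm_num
    rw [him]
    ring
  intro z₀
  -- bounds on the ball around z₀
  set M : ℝ := ‖z₀‖ + 1 with hM
  have hM0 : 0 < M := by positivity
  set b : ℝ := 2 * Real.pi * M + 1 with hb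
  set g : Fin 3 → ℤ → ℝ := fun i m =>
    Real.exp (-(Real.pi * c) * ((m : ℝ) + δ' i) ^ 2 + b * |(m : ℝ) + δ' i|) with hg
  set u : (Fin 3 → ℤ) → ℝ := fun n => (2 * Real.pi) * ∏ i, g i (n i) with hu
  have hgprod : ∀ n, ∏ i, g i (n i) =
      Real.exp (-(Real.pi * c) * (∑ i, (v n i) ^ 2) + b * ∑ i, |v n i|) := by
    intro n
    rw [← Real.exp_sum]
    congr 1
    rw [Finset.sum_add_distrib, ← Finset.mul_sum, ← Finset.mul_sum]
  have husumm : Summable u := by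
    apply Summable.mul_left
    exact summ_pi3 (fun i => summ1d (Real.pi * c) b (δ' i) (by positivity))
      (fun i m => (Real.exp_pos _).le)
  have hS1 : ∀ n, (0:ℝ) ≤ ∑ i, |v n i| := fun n => Finset.sum_nonneg fun i _ => abs_nonneg _
  -- bound on ‖f n z‖ on the ball
  have hfb : ∀ n, ∀ z ∈ Metric.ball z₀ 1, ‖f n z‖ ≤
      Real.exp (-(Real.pi * c) * (∑ i, (v n i) ^ 2) + 2 * Real.pi * M * ∑ i, |v n i|) := by
    intro n z hz
    rw [hfnorm]
    apply Real.exp_le_exp.2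
    have him : ∀ i, |(z i).im| ≤ M := by
      intro i
      have h1 : |(z i).im| ≤ ‖z i‖ := Complex.abs_im_le_norm _
      have h2 : ‖z i‖ ≤ ‖z‖ := norm_le_pi_norm z i
      have h3 : ‖z‖ ≤ M := by
        have h4 : ‖z - z₀‖ < 1 := by
          simpa [dist_eq_norm] using hz
        have h5 : ‖z‖ - ‖z₀‖ ≤ ‖z - z₀‖ := norm_sub_norm_le z z₀
        rw [hM]; linarith
      linarith
    have hT : |∑ i, v n i * (z i).im| ≤ M * ∑ i, |v n i| := by
      calc |∑ i, v n i * (z i).im| ≤ ∑ i, |v n i * (z i).im| := Finset.abs_sum_le_sum_abs _ _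
        _ ≤ ∑ i, |v n i| * M := by
            apply Finset.sum_le_sum
            intro i _
            rw [abs_mul]
            exact mul_le_mul_of_nonneg_left (him i) (abs_nonneg _)
        _ = M * ∑ i, |v n i| := by rw [← Finset.sum_mul]; ring
    have hq : c * (∑ i, (v n i) ^ 2) ≤ v n ⬝ᵥ (τ.map Complex.im) *ᵥ v n := hAq (v n)
    have habs := abs_le.1 hT
    nlinarith [Real.pi_pos, habs.1, habs.2]
  -- bound on derivative norm
  have hLb : ∀ n, ‖L n‖ ≤ 2 * Real.pi * ∑ i, |v n i| := by
    intro n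
    apply ContinuousLinearMap.opNorm_le_bound _ (by positivity)
    intro z
    rw [hLapp]
    have h2pi : ‖(2 * (Real.pi : ℂ) * Complex.I)‖ = 2 * Real.pi := by
      simp [norm_mul, Real.pi_nonneg]
    calc ‖2 * (Real.pi : ℂ) * Complex.I * (w n ⬝ᵥ z)‖
        = (2 * Real.pi) * ‖w n ⬝ᵥ z‖ := by rw [norm_mul, h2pi]
      _ ≤ (2 * Real.pi) * ((∑ i, |v n i|) * ‖z‖) := by
          apply mul_le_mul_of_nonneg_left _ (by positivity)
          calc ‖w n ⬝ᵥ z‖ ≤ ∑ i, ‖w n i * z i‖ := norm_sum_le _ _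
            _ ≤ ∑ i, |v n i| * ‖z‖ := by
                apply Finset.sum_le_sum
                intro i _
                rw [norm_mul]
                have : ‖w n i‖ = |v n i| := by
                  simp [hwdef]
                rw [this]
                exact mul_le_mul_of_nonneg_left (norm_le_pi_norm z i) (abs_nonneg _)
            _ = (∑ i, |v n i|) * ‖z‖ := by rw [Finset.sum_mul]
      _ = 2 * Real.pi * (∑ i, |v n i|) * ‖z‖ := by ring
  have hbound : ∀ n, ∀ z ∈ Metric.ball z₀ 1, ‖f n z • L n‖ ≤ u n := by
    intro n z hz
    rw [norm_smul (f n z) (L n)]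
    set S1 := ∑ i, |v n i| with hS1def
    set S2 := ∑ i, (v n i) ^ 2 with hS2def
    have h1 : ‖f n z‖ * ‖L n‖ ≤
        Real.exp (-(Real.pi * c) * S2 + 2 * Real.pi * M * S1) * (2 * Real.pi * S1) :=
      mul_le_mul (hfb n z hz) (hLb n) (norm_nonneg _) (Real.exp_pos _).le
    have h2 : S1 ≤ Real.exp S1 := by
      have := Real.add_one_le_exp S1
      linarith
    have h3 : Real.exp (-(Real.pi * c) * S2 + 2 * Real.pi * M * S1) * (2 * Real.pi * S1)
        ≤ (2 * Real.pi) * Real.exp (-(Real.pi * c) * S2 + b * S1) := by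
      have h4 : Real.exp (-(Real.pi * c) * S2 + b * S1)
          = Real.exp (-(Real.pi * c) * S2 + 2 * Real.pi * M * S1) * Real.exp S1 := by
        rw [← Real.exp_add]
        congr 1
        rw [hb]
        ring
      rw [h4]
      nlinarith [mul_le_mul_of_nonneg_left h2
        (by positivity : (0:ℝ) ≤ 2 * Real.pi * Real.exp (-(Real.pi * c) * S2 + 2 * Real.pi * M * S1))]
    calc ‖f n z‖ * ‖L n‖ ≤ _ := h1
      _ ≤ (2 * Real.pi) * Real.exp (-(Real.pi * c) * S2 + b * S1) := h3
      _ = u n := by simp only [hu]; rw [hgprod n]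
  -- summability at z₀
  have hsum0 : Summable (fun n => f n z₀) := by
    apply Summable.of_norm_bounded husumm
    intro n
    have h1 := hfb n z₀ (Metric.mem_ball_self one_pos)
    have h2 : Real.exp (-(Real.pi * c) * (∑ i, (v n i) ^ 2) + 2 * Real.pi * M * ∑ i, |v n i|)
        ≤ u n := by
      simp only [hu]
      rw [hgprod n]
      have h3 : Real.exp (-(Real.pi * c) * (∑ i, (v n i) ^ 2) + 2 * Real.pi * M * ∑ i, |v n i|)
          ≤ Real.exp (-(Real.pi * c) * (∑ i, (v n i) ^ 2) + b * ∑ i, |v n i|) := by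
        apply Real.exp_le_exp.2
        have h5 : b * ∑ i, |v n i| = 2 * Real.pi * M * (∑ i, |v n i|) + ∑ i, |v n i| := by
          rw [hb]; ring
        linarith [hS1 n]
      have h4 : (1:ℝ) ≤ 2 * Real.pi := by linarith [Real.pi_gt_three]
      calc Real.exp (-(Real.pi * c) * (∑ i, (v n i) ^ 2) + 2 * Real.pi * M * ∑ i, |v n i|)
          ≤ Real.exp (-(Real.pi * c) * (∑ i, (v n i) ^ 2) + b * ∑ i, |v n i|) := h3
        _ ≤ 2 * Real.pi * Real.exp (-(Real.pi * c) * (∑ i, (v n i) ^ 2) + b * ∑ i, |v n i|) :=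
            le_mul_of_one_le_left (Real.exp_pos _).le h4
    exact h1.trans h2
  exact (hasFDerivAt_tsum_of_isPreconnected husumm Metric.isOpen_ball
    (convex_ball z₀ 1).isPreconnected (fun n x _ => hderiv n x) hbound
    (Metric.mem_ball_self one_pos) hsum0 (Metric.mem_ball_self one_pos)).differentiableAt
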